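/- Let m ≥ 1 be an integer and set k = 2m. In the field ℚ(t) of rational functions over ℚ, with P_k(t) = 1 + (k+4)·Σ_{i=1}^{m−1} t^i + (k+5)·t^m + (k+5)·t^{m+1} + (k+4)·Σ_{i=m+2}^{k} t^i + t^{k+1}, the following identity holds: P_k(t)/((1−t)²(1−t^k)) − (k+4)·t/(1−t)³ = (1 − t^{k+2})/((1−t)²(1−t^m)(1−t^{m+1})). (This is the identity H_{ℙ(1,1,k)} + (k+4)·Q = Hilbert series of a hypersurface of degree k+2 in ℙ(1,1,m,m+1).) -/

import Mathlib

/-- The variable `t` in the field `ℚ(t)` of rational functions. -/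
noncomputable def t : RatFunc ℚ := RatFunc.X

/-- The numerator `P_k(t)` of the anticanonical Hilbert series of `ℙ(1,1,k)` for even
`k = 2m`. -/
noncomputable def hilbNumEven (m : ℕ) : RatFunc ℚ :=
  1 + ((2 * m : ℕ) + 4 : RatFunc ℚ) * ∑ i ∈ Finset.Icc 1 (m - 1), t ^ i
    + ((2 * m : ℕ) + 5 : RatFunc ℚ) * t ^ m + ((2 * m : ℕ) + 5 : RatFunc ℚ) * t ^ (m + 1)
    + ((2 * m : ℕ) + 4 : RatFunc ℚ) * ∑ i ∈ Finset.Icc (m + 2) (2 * m), t ^ i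
    + t ^ (2 * m + 1)

lemma t_pow_ne_one (n : ℕ) (hn : 1 ≤ n) : t ^ n ≠ 1 := by
  intro h
  have : (Polynomial.X : Polynomial ℚ) ^ n = 1 := by
    apply RatFunc.algebraMap_injective ℚ
    simpa [t, map_pow, RatFunc.algebraMap_X, map_one] using h
  have := congrArg Polynomial.natDegree this
  simp [Polynomial.natDegree_X_pow] at this
  omega

theorem hilbert_series_k_plus_four_even (m : ℕ) (hm : 1 ≤ m) :
    hilbNumEven m / ((1 - t) ^ 2 * (1 - t ^ (2 * m)))
        - ((2 * m : ℕ) + 4 : RatFunc ℚ) * t / (1 - t) ^ 3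
      = (1 - t ^ (2 * m + 2)) / ((1 - t) ^ 2 * (1 - t ^ m) * (1 - t ^ (m + 1))) := by
  have ht : t ≠ 1 := by simpa using t_pow_ne_one 1 le_rfl
  have h1 : (1 : RatFunc ℚ) - t ≠ 0 := sub_ne_zero.mpr (Ne.symm ht)
  have h1' : t - 1 ≠ 0 := sub_ne_zero.mpr ht
  have hpm : (1 : RatFunc ℚ) - t ^ m ≠ 0 := sub_ne_zero.mpr (Ne.symm (t_pow_ne_one m hm))
  have hpm1 : (1 : RatFunc ℚ) - t ^ (m + 1) ≠ 0 :=
    sub_ne_zero.mpr (Ne.symm (t_pow_ne_one (m + 1) (by omega)))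
  have hp2m : (1 : RatFunc ℚ) - t ^ (2 * m) ≠ 0 :=
    sub_ne_zero.mpr (Ne.symm (t_pow_ne_one (2 * m) (by omega)))
  have hs1 : ∑ i ∈ Finset.Icc 1 (m - 1), t ^ i = (t ^ m - t ^ 1) / (t - 1) := by
    rw [← Finset.Ico_add_one_right_eq_Icc, Nat.sub_add_cancel hm]
    exact geom_sum_Ico ht hm
  have hs2 : ∑ i ∈ Finset.Icc (m + 2) (2 * m), t ^ i
      = (t ^ (2 * m + 1) - t ^ (m + 2)) / (t - 1) := by
    rw [← Finset.Ico_add_one_right_eq_Icc]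
    exact geom_sum_Ico ht (by omega)
  rw [hilbNumEven, hs1, hs2]
  have e1 : t ^ (2 * m) = (t ^ m) ^ 2 := by rw [← pow_mul]; ring_nf
  have e2 : t ^ (2 * m + 1) = (t ^ m) ^ 2 * t := by rw [pow_add, e1, pow_one]
  have e3 : t ^ (2 * m + 2) = (t ^ m) ^ 2 * t ^ 2 := by rw [pow_add, e1]
  have e4 : t ^ (m + 1) = t ^ m * t := by rw [pow_add, pow_one]
  have e5 : t ^ (m + 2) = t ^ m * t ^ 2 := by rw [pow_add]
  rw [e1, e2, e3, e4, e5]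
  have hpm1' : (1 : RatFunc ℚ) - t ^ m * t ≠ 0 := by rwa [e4] at hpm1
  have hp2m' : (1 : RatFunc ℚ) - (t ^ m) ^ 2 ≠ 0 := by rwa [e1] at hp2m
  have hA : ((1 : RatFunc ℚ) - t) ^ 2 * (1 - (t ^ m) ^ 2) ≠ 0 :=
    mul_ne_zero (pow_ne_zero _ h1) hp2m'
  have hB : ((1 : RatFunc ℚ) - t) ^ 3 ≠ 0 := pow_ne_zero _ h1
  have hC : ((1 : RatFunc ℚ) - t) ^ 2 * (1 - t ^ m) * (1 - t ^ m * t) ≠ 0 :=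
    mul_ne_zero (mul_ne_zero (pow_ne_zero _ h1) hpm) hpm1'
  rw [div_sub_div _ _ hA hB, div_eq_div_iff (mul_ne_zero hA hB) hC]
  field_simp
  ring
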